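/- The function W₀(ξ) = (e^ξ - 1)²/(e^{ξ/2}·√(e^{2ξ} - 1)), viewed as a function of (x,ξ) ∈ ℝ × (0,∞) independent of x, satisfies the differential equation W_{ξξ} + W_{xx} - P(ξ)W = 0 with P(ξ) = (e^{4ξ} + 10e^{2ξ} + 1)/(4(e^{2ξ}-1)²), extends continuously to ξ = 0 with value 0, and is positive for ξ > 0. -/

import Mathlib

noncomputable def P (ξ : ℝ) : ℝ :=
  (Real.exp (4 * ξ) + 10 * Real.exp (2 * ξ) + 1) / (4 * (Real.exp (2 * ξ) - 1) ^ 2)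

noncomputable def W₀ (ξ : ℝ) : ℝ :=
  (Real.exp ξ - 1) ^ 2 / (Real.exp (ξ / 2) * Real.sqrt (Real.exp (2 * ξ) - 1))

noncomputable def gW (ξ : ℝ) : ℝ :=
  Real.exp ((3/2) * Real.log (Real.exp ξ - 1) - ξ/2 - (1/2) * Real.log (Real.exp ξ + 1))

noncomputable def hD (ξ : ℝ) : ℝ :=
  (3/2) * (Real.exp ξ / (Real.exp ξ - 1)) - 1/2 - (1/2) * (Real.exp ξ / (Real.exp ξ + 1))

lemma one_lt_exp_of_pos {ξ : ℝ} (hξ : 0 < ξ) : 1 < Real.exp ξ := by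
  have := Real.exp_lt_exp.mpr hξ
  rwa [Real.exp_zero] at this

lemma exp_two_mul_sub_one (ξ : ℝ) :
    Real.exp (2 * ξ) - 1 = (Real.exp ξ - 1) * (Real.exp ξ + 1) := by
  rw [show (2:ℝ) * ξ = ξ + ξ by ring, Real.exp_add]; ring

lemma W0_eq_g {ξ : ℝ} (hξ : 0 < ξ) : W₀ ξ = gW ξ := by
  have ht := one_lt_exp_of_pos hξ
  have hpos1 : 0 < Real.exp ξ - 1 := by linarith
  have hpos2 : 0 < Real.exp ξ + 1 := by positivity
  unfold W₀ gW
  rw [exp_two_mul_sub_one, Real.sqrt_eq_rpow,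
    Real.rpow_def_of_pos (by positivity),
    Real.log_mul (ne_of_gt hpos1) (ne_of_gt hpos2), ← Real.exp_add,
    div_eq_iff (Real.exp_ne_zero _), ← Real.exp_add]
  have : (3/2) * Real.log (Real.exp ξ - 1) - ξ/2 - (1/2) * Real.log (Real.exp ξ + 1)
      + (ξ/2 + (Real.log (Real.exp ξ - 1) + Real.log (Real.exp ξ + 1)) * (1/2))
      = Real.log (Real.exp ξ - 1) + Real.log (Real.exp ξ - 1) := by ring
  rw [this, Real.exp_add, Real.exp_log hpos1]; ring

lemma g_eq_sqrt {ξ : ℝ} (hξ : 0 < ξ) :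
    gW ξ = Real.sqrt ((Real.exp ξ - 1) ^ 3 / (Real.exp ξ * (Real.exp ξ + 1))) := by
  have ht := one_lt_exp_of_pos hξ
  have hpos1 : 0 < Real.exp ξ - 1 := by linarith
  have hpos2 : 0 < Real.exp ξ + 1 := by positivity
  rw [Real.sqrt_eq_rpow, Real.rpow_def_of_pos (by positivity),
    Real.log_div (by positivity) (by positivity),
    Real.log_mul (Real.exp_ne_zero _) (ne_of_gt hpos2),
    Real.log_pow, Real.log_exp]
  unfold gW
  ring_nf

lemma hasDerivAt_g {ξ : ℝ} (hξ : 0 < ξ) : HasDerivAt gW (hD ξ * gW ξ) ξ := by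
  have ht := one_lt_exp_of_pos hξ
  have hpos1 : (0:ℝ) < Real.exp ξ - 1 := by linarith
  have hpos2 : (0:ℝ) < Real.exp ξ + 1 := by positivity
  have d1 : HasDerivAt (fun ξ => Real.exp ξ - 1) (Real.exp ξ) ξ :=
    (Real.hasDerivAt_exp ξ).sub_const 1
  have d2 : HasDerivAt (fun ξ => Real.exp ξ + 1) (Real.exp ξ) ξ :=
    (Real.hasDerivAt_exp ξ).add_const 1
  have dl1 := d1.log (ne_of_gt hpos1)
  have dl2 := d2.log (ne_of_gt hpos2)
  have dx : HasDerivAt (fun ξ : ℝ => ξ/2) (1/2) ξ := by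
    simpa using (hasDerivAt_id ξ).div_const 2
  have inner : HasDerivAt
      (fun ξ => (3/2) * Real.log (Real.exp ξ - 1) - ξ/2 - (1/2) * Real.log (Real.exp ξ + 1))
      (hD ξ) ξ := by
    have := ((dl1.const_mul (3/2 : ℝ)).sub dx).sub (dl2.const_mul (1/2 : ℝ))
    exact this
  have h := inner.exp
  rw [mul_comm] at h
  exact h

lemma hasDerivAt_gder {ξ : ℝ} (hξ : 0 < ξ) :
    HasDerivAt (fun ξ => hD ξ * gW ξ) (P ξ * gW ξ) ξ := by
  have ht := one_lt_exp_of_pos hξ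
  have hpos1 : (0:ℝ) < Real.exp ξ - 1 := by linarith
  have hpos2 : (0:ℝ) < Real.exp ξ + 1 := by positivity
  have d1 : HasDerivAt (fun ξ => Real.exp ξ - 1) (Real.exp ξ) ξ :=
    (Real.hasDerivAt_exp ξ).sub_const 1
  have d2 : HasDerivAt (fun ξ => Real.exp ξ + 1) (Real.exp ξ) ξ :=
    (Real.hasDerivAt_exp ξ).add_const 1
  have q1 := (Real.hasDerivAt_exp ξ).div d1 (ne_of_gt hpos1)
  have q2 := (Real.hasDerivAt_exp ξ).div d2 (ne_of_gt hpos2)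
  have dhD : HasDerivAt hD
      (-(3/2) * (Real.exp ξ / (Real.exp ξ - 1) ^ 2)
        - (1/2) * (Real.exp ξ / (Real.exp ξ + 1) ^ 2)) ξ := by
    have := ((q1.const_mul (3/2 : ℝ)).sub (hasDerivAt_const ξ (1/2 : ℝ))).sub
      (q2.const_mul (1/2 : ℝ))
    refine this.congr_deriv ?_
    field_simp
    ring
  have dprod := dhD.mul (hasDerivAt_g hξ)
  refine dprod.congr_deriv ?_
  have h2 : Real.exp (2 * ξ) = Real.exp ξ ^ 2 := by
    rw [show (2:ℝ) * ξ = ξ + ξ by ring, Real.exp_add]; ring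
  have h4 : Real.exp (4 * ξ) = Real.exp ξ ^ 4 := by
    rw [show (4:ℝ) * ξ = ξ + ξ + ξ + ξ by ring, Real.exp_add, Real.exp_add, Real.exp_add]; ring
  have hne : (Real.exp ξ ^ 2 - 1) ≠ 0 := by nlinarith
  unfold P hD
  rw [h2, h4]
  field_simp
  ring

lemma W0_pos {ξ : ℝ} (hξ : 0 < ξ) : 0 < W₀ ξ := by
  rw [W0_eq_g hξ]; exact Real.exp_pos _

/-- `W₀`, viewed as a function of `(x,ξ)` independent of `x`, satisfies
`W_{ξξ} + W_{xx} - P(ξ)W = 0` on `ℝ × (0,∞)`, tends to `0` as `ξ → 0⁺`,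
and is positive for `ξ > 0`. -/
theorem W0_eigenfunction :
    (∀ x : ℝ, ∀ ξ > (0 : ℝ),
      deriv (deriv W₀) ξ + deriv (deriv (fun _ : ℝ => W₀ ξ)) x - P ξ * W₀ ξ = 0) ∧
    Filter.Tendsto W₀ (nhdsWithin 0 (Set.Ioi (0 : ℝ))) (nhds 0) ∧
    ∀ ξ > (0 : ℝ), 0 < W₀ ξ := by
  refine ⟨?_, ?_, fun ξ hξ => W0_pos hξ⟩
  · intro x ξ hξ
    have hmem : Set.Ioi (0:ℝ) ∈ nhds ξ := Ioi_mem_nhds hξ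
    have e2 : deriv W₀ =ᶠ[nhds ξ] (fun ξ => hD ξ * gW ξ) := by
      filter_upwards [hmem] with y hy
      have e1 : W₀ =ᶠ[nhds y] gW :=
        Filter.eventuallyEq_of_mem (Ioi_mem_nhds hy) (fun z hz => W0_eq_g hz)
      rw [e1.deriv_eq, (hasDerivAt_g hy).deriv]
    have h1 : deriv (deriv W₀) ξ = P ξ * gW ξ := by
      rw [e2.deriv_eq, (hasDerivAt_gder hξ).deriv]
    have h3 : deriv (deriv (fun _ : ℝ => W₀ ξ)) x = 0 := by
      simp [deriv_const']
    rw [h1, h3, W0_eq_g hξ]; ring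
  · have e : W₀ =ᶠ[nhdsWithin 0 (Set.Ioi (0:ℝ))]
        (fun ξ => Real.sqrt ((Real.exp ξ - 1) ^ 3 / (Real.exp ξ * (Real.exp ξ + 1)))) := by
      filter_upwards [self_mem_nhdsWithin] with y hy
      rw [W0_eq_g hy, g_eq_sqrt hy]
    refine Filter.Tendsto.congr' e.symm ?_
    have hc : ContinuousAt
        (fun ξ => Real.sqrt ((Real.exp ξ - 1) ^ 3 / (Real.exp ξ * (Real.exp ξ + 1)))) 0 := by
      apply Real.continuous_sqrt.continuousAt.comp
      apply ContinuousAt.div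
      · fun_prop
      · fun_prop
      · have := Real.exp_pos (0:ℝ)
        positivity
    have := hc.tendsto
    simp only [Real.exp_zero] at this
    norm_num at this
    exact tendsto_nhdsWithin_of_tendsto_nhds this
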